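/- Let Ω ⊆ ℝ be open and let ψ : Ω → Ω be injective and continuous. Then ψ is run-away if and only if it is strongly run-away, and this holds if and only if ψ has no periodic points (i.e., ψ_n(x) ≠ x for every x ∈ Ω and every n ≥ 1). -/

import Mathlib

open Set Function

private lemma mono_of_pair {f : ℝ → ℝ} {D : Set ℝ} (hD : D.OrdConnected)
    (hc : ContinuousOn f D) (hi : InjOn f D) {a b : ℝ} (ha : a ∈ D) (hb : b ∈ D)
    (hab : a < b) (hfab : f a < f b) : StrictMonoOn f D := by
  intro x hx y hy hxy
  have hsD : min a x ∈ D := by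
    rcases le_total a x with h | h
    · rwa [min_eq_left h]
    · rwa [min_eq_right h]
  have htD : max b y ∈ D := by
    rcases le_total b y with h | h
    · rwa [max_eq_right h]
    · rwa [max_eq_left h]
  have hst : min a x ≤ max b y := le_trans (min_le_left a x) (le_trans hab.le (le_max_left b y))
  have hsub : Icc (min a x) (max b y) ⊆ D := hD.out hsD htD
  have haI : a ∈ Icc (min a x) (max b y) := ⟨min_le_left a x, le_trans hab.le (le_max_left b y)⟩
  have hbI : b ∈ Icc (min a x) (max b y) := ⟨le_trans (min_le_left a x) hab.le, le_max_left b y⟩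
  have hxI : x ∈ Icc (min a x) (max b y) := ⟨min_le_right a x, le_trans hxy.le (le_max_right b y)⟩
  have hyI : y ∈ Icc (min a x) (max b y) := ⟨le_trans (min_le_right a x) hxy.le, le_max_right b y⟩
  rcases ContinuousOn.strictMonoOn_of_injOn_Icc' hst (hc.mono hsub) (hi.mono hsub) with h | h
  · exact h hxI hyI hxy
  · exact absurd (h haI hbI hab) (not_lt.mpr hfab.le)

private lemma mono_or_anti {f : ℝ → ℝ} {D : Set ℝ} (hD : D.OrdConnected)
    (hc : ContinuousOn f D) (hi : InjOn f D) :
    StrictMonoOn f D ∨ StrictAntiOn f D := by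
  by_cases hpair : ∃ a ∈ D, ∃ b ∈ D, a < b ∧ f a < f b
  · obtain ⟨a, ha, b, hb, hab, hfab⟩ := hpair
    exact Or.inl (mono_of_pair hD hc hi ha hb hab hfab)
  · push_neg at hpair
    right
    intro x hx y hy hxy
    have h1 : f y ≤ f x := hpair x hx y hy hxy
    have h2 : f x ≠ f y := fun h => hxy.ne (hi hx hy h)
    exact lt_of_le_of_ne h1 (Ne.symm h2)

private lemma sign_const {f : ℝ → ℝ} {D : Set ℝ} (hD : IsPreconnected D)
    (hc : ContinuousOn f D) (hne : ∀ t ∈ D, f t ≠ t) :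
    (∀ t ∈ D, t < f t) ∨ (∀ t ∈ D, f t < t) := by
  by_contra hcon
  push_neg at hcon
  obtain ⟨⟨u, hu, hu2⟩, ⟨v, hv, hv2⟩⟩ := hcon
  have hu3 : f u < u := lt_of_le_of_ne hu2 (hne u hu)
  have hv3 : v < f v := lt_of_le_of_ne hv2 (Ne.symm (hne v hv))
  have hgc : ContinuousOn (fun t => f t - t) D := hc.sub continuousOn_id
  have himg : IsPreconnected ((fun t => f t - t) '' D) := hD.image _ hgc
  have h0 : (0 : ℝ) ∈ Icc (f u - u) (f v - v) := ⟨by linarith, by linarith⟩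
  have := himg.ordConnected.out (mem_image_of_mem _ hu) (mem_image_of_mem _ hv) h0
  obtain ⟨t, ht, ht0⟩ := this
  exact hne t ht (by dsimp at ht0; linarith)

private lemma strictMonoOn_iterate {g : ℝ → ℝ} {D : Set ℝ} (hmono : StrictMonoOn g D)
    (hm : MapsTo g D D) : ∀ n, StrictMonoOn g^[n] D := by
  intro n
  induction n with
  | zero => exact fun x hx y hy h => h
  | succ n ih =>
    intro x hx y hy hxy
    rw [iterate_succ_apply, iterate_succ_apply]
    exact ih (hm hx) (hm hy) (hmono hx hy hxy)

private lemma continuousOn_iterate {g : ℝ → ℝ} {D : Set ℝ} (hc : ContinuousOn g D)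
    (hm : MapsTo g D D) : ∀ n, ContinuousOn g^[n] D := by
  intro n
  induction n with
  | zero => simpa using continuousOn_id
  | succ n ih => rw [iterate_succ]; exact ih.comp hc hm

private lemma injOn_iterate {g : ℝ → ℝ} {D : Set ℝ} (hi : InjOn g D)
    (hm : MapsTo g D D) : ∀ n, InjOn g^[n] D := by
  intro n
  induction n with
  | zero => simpa using injOn_id D
  | succ n ih => rw [iterate_succ]; exact ih.comp hi hm

private lemma escape_up {g : ℝ → ℝ} {D : Set ℝ} (hD : IsPreconnected D)
    (hm : MapsTo g D D) (hc : ContinuousOn g D) (hmono : StrictMonoOn g D)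
    (hup : ∀ t ∈ D, t < g t) {L M : Set ℝ} (hL : IsCompact L) (hM : IsCompact M)
    (hLD : L ⊆ D) (hMD : M ⊆ D) : ∃ N, ∀ m, N ≤ m → (g^[m] '' L) ∩ M = ∅ := by
  rcases L.eq_empty_or_nonempty with rfl | hLne
  · exact ⟨0, fun m _ => by simp⟩
  rcases M.eq_empty_or_nonempty with rfl | hMne
  · exact ⟨0, fun m _ => by simp⟩
  obtain ⟨x₀, hx₀L, hx₀min⟩ := hL.exists_isLeast hLne
  obtain ⟨B, hBM, hBmax⟩ := hM.exists_isGreatest hMne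
  set u : ℕ → ℝ := fun m => g^[m] x₀ with hu
  have humem : ∀ m, u m ∈ D := fun m => (hm.iterate m) (hLD hx₀L)
  have hustep : ∀ m, u m < u (m + 1) := by
    intro m
    have : u (m + 1) = g (u m) := iterate_succ_apply' g m x₀
    rw [this]
    exact hup _ (humem m)
  have humono : StrictMono u := strictMono_nat_of_lt_succ hustep
  have hclaim : ∃ N, B < u N := by
    by_contra hcon
    push_neg at hcon
    have hbdd : BddAbove (range u) := ⟨B, by rintro _ ⟨m, rfl⟩; exact hcon m⟩
    set ℓ := ⨆ m, u m with hℓ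
    have htend : Filter.Tendsto u Filter.atTop (nhds ℓ) := tendsto_atTop_ciSup humono.monotone hbdd
    have hℓD : ℓ ∈ D := by
      have h1 : u 0 ≤ ℓ := le_ciSup hbdd 0
      have h2 : ℓ ≤ B := ciSup_le hcon
      exact hD.ordConnected.out (humem 0) (hMD hBM) ⟨h1, h2⟩
    have htend2 : Filter.Tendsto u Filter.atTop (nhdsWithin ℓ D) :=
      tendsto_nhdsWithin_iff.mpr ⟨htend, Filter.Eventually.of_forall humem⟩
    have htendg : Filter.Tendsto (fun m => g (u m)) Filter.atTop (nhds (g ℓ)) :=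
      (hc ℓ hℓD).tendsto.comp htend2
    have htendg' : Filter.Tendsto (fun m => u (m + 1)) Filter.atTop (nhds ℓ) :=
      htend.comp (Filter.tendsto_add_atTop_nat 1)
    have heq : (fun m => g (u m)) = fun m => u (m + 1) := by
      funext m; exact (iterate_succ_apply' g m x₀).symm
    rw [heq] at htendg
    have : g ℓ = ℓ := tendsto_nhds_unique htendg htendg'
    exact absurd this (ne_of_gt (hup ℓ hℓD))
  obtain ⟨N, hN⟩ := hclaim
  refine ⟨N, fun m hm' => ?_⟩
  rw [eq_empty_iff_forall_notMem]
  rintro z ⟨⟨w, hwL, rfl⟩, hzM⟩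
  have h1 : u m ≤ g^[m] w := by
    rcases eq_or_lt_of_le (hx₀min hwL) with rfl | hlt
    · exact le_refl _
    · exact (strictMonoOn_iterate hmono hm m (hLD hx₀L) (hLD hwL) hlt).le
  have h2 : u N ≤ u m := humono.monotone hm'
  have h3 : g^[m] w ≤ B := hBmax hzM
  linarith [hN]

private lemma escape_down {g : ℝ → ℝ} {D : Set ℝ} (hD : IsPreconnected D)
    (hm : MapsTo g D D) (hc : ContinuousOn g D) (hmono : StrictMonoOn g D)
    (hdn : ∀ t ∈ D, g t < t) {L M : Set ℝ} (hL : IsCompact L) (hM : IsCompact M)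
    (hLD : L ⊆ D) (hMD : M ⊆ D) : ∃ N, ∀ m, N ≤ m → (g^[m] '' L) ∩ M = ∅ := by
  rcases L.eq_empty_or_nonempty with rfl | hLne
  · exact ⟨0, fun m _ => by simp⟩
  rcases M.eq_empty_or_nonempty with rfl | hMne
  · exact ⟨0, fun m _ => by simp⟩
  obtain ⟨x₀, hx₀L, hx₀max⟩ := hL.exists_isGreatest hLne
  obtain ⟨B, hBM, hBmin⟩ := hM.exists_isLeast hMne
  set u : ℕ → ℝ := fun m => g^[m] x₀ with hu
  have humem : ∀ m, u m ∈ D := fun m => (hm.iterate m) (hLD hx₀L)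
  have hustep : ∀ m, u (m + 1) < u m := by
    intro m
    have : u (m + 1) = g (u m) := iterate_succ_apply' g m x₀
    rw [this]
    exact hdn _ (humem m)
  have humono : StrictAnti u := strictAnti_nat_of_succ_lt hustep
  have hclaim : ∃ N, u N < B := by
    by_contra hcon
    push_neg at hcon
    have hbdd : BddBelow (range u) := ⟨B, by rintro _ ⟨m, rfl⟩; exact hcon m⟩
    set ℓ := ⨅ m, u m with hℓ
    have htend : Filter.Tendsto u Filter.atTop (nhds ℓ) := tendsto_atTop_ciInf humono.antitone hbdd
    have hℓD : ℓ ∈ D := by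
      have h1 : ℓ ≤ u 0 := ciInf_le hbdd 0
      have h2 : B ≤ ℓ := le_ciInf hcon
      exact hD.ordConnected.out (hMD hBM) (humem 0) ⟨h2, h1⟩
    have htend2 : Filter.Tendsto u Filter.atTop (nhdsWithin ℓ D) :=
      tendsto_nhdsWithin_iff.mpr ⟨htend, Filter.Eventually.of_forall humem⟩
    have htendg : Filter.Tendsto (fun m => g (u m)) Filter.atTop (nhds (g ℓ)) :=
      (hc ℓ hℓD).tendsto.comp htend2
    have htendg' : Filter.Tendsto (fun m => u (m + 1)) Filter.atTop (nhds ℓ) :=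
      htend.comp (Filter.tendsto_add_atTop_nat 1)
    have heq : (fun m => g (u m)) = fun m => u (m + 1) := by
      funext m; exact (iterate_succ_apply' g m x₀).symm
    rw [heq] at htendg
    have : g ℓ = ℓ := tendsto_nhds_unique htendg htendg'
    exact absurd this (ne_of_lt (hdn ℓ hℓD))
  obtain ⟨N, hN⟩ := hclaim
  refine ⟨N, fun m hm' => ?_⟩
  rw [eq_empty_iff_forall_notMem]
  rintro z ⟨⟨w, hwL, rfl⟩, hzM⟩
  have h1 : g^[m] w ≤ u m := by
    rcases eq_or_lt_of_le (hx₀max hwL) with heq | hlt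
    · rw [heq]
    · exact (strictMonoOn_iterate hmono hm m (hLD hwL) (hLD hx₀L) hlt).le
  have h2 : u m ≤ u N := humono.antitone hm'
  have h3 : B ≤ g^[m] w := hBmin hzM
  linarith [hN]
private lemma escape_mono {g : ℝ → ℝ} {D : Set ℝ} (hD : IsPreconnected D)
    (hm : MapsTo g D D) (hc : ContinuousOn g D) (hmono : StrictMonoOn g D)
    (hfix : ∀ t ∈ D, g t ≠ t) {L M : Set ℝ} (hL : IsCompact L) (hM : IsCompact M)
    (hLD : L ⊆ D) (hMD : M ⊆ D) : ∃ N, ∀ m, N ≤ m → (g^[m] '' L) ∩ M = ∅ := by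
  rcases sign_const hD hc hfix with h | h
  · exact escape_up hD hm hc hmono h hL hM hLD hMD
  · exact escape_down hD hm hc hmono h hL hM hLD hMD

private lemma escape {g : ℝ → ℝ} {D : Set ℝ} (hD : IsPreconnected D)
    (hm : MapsTo g D D) (hc : ContinuousOn g D) (hi : InjOn g D)
    (hfix1 : ∀ t ∈ D, g t ≠ t) (hfix2 : ∀ t ∈ D, g (g t) ≠ t)
    {L M : Set ℝ} (hL : IsCompact L) (hM : IsCompact M)
    (hLD : L ⊆ D) (hMD : M ⊆ D) : ∃ N, ∀ m, N ≤ m → (g^[m] '' L) ∩ M = ∅ := by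
  rcases mono_or_anti hD.ordConnected hc hi with hmono | hanti
  · exact escape_mono hD hm hc hmono hfix1 hL hM hLD hMD
  · -- g is strictly antitone; work with h := g^[2]
    have hm2 : MapsTo g^[2] D D := hm.iterate 2
    have hc2 : ContinuousOn g^[2] D := continuousOn_iterate hc hm 2
    have hmono2 : StrictMonoOn g^[2] D := by
      intro x hx y hy hxy
      have e : ∀ z, g^[2] z = g (g z) := fun z => by
        rw [show (2:ℕ) = 1 + 1 from rfl, iterate_add_apply, iterate_one]
      rw [e x, e y]
      exact hanti (hm hy) (hm hx) (hanti hx hy hxy)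
    have hfix2' : ∀ t ∈ D, g^[2] t ≠ t := by
      intro t ht
      have e : g^[2] t = g (g t) := by
        rw [show (2:ℕ) = 1 + 1 from rfl, iterate_add_apply, iterate_one]
      rw [e]; exact hfix2 t ht
    have hgL : IsCompact (g '' L) := hL.image_of_continuousOn (hc.mono hLD)
    have hgLD : g '' L ⊆ D := by
      rintro _ ⟨w, hw, rfl⟩; exact hm (hLD hw)
    obtain ⟨N₀, hN₀⟩ := escape_mono hD hm2 hc2 hmono2 hfix2' hL hM hLD hMD
    obtain ⟨N₁, hN₁⟩ := escape_mono hD hm2 hc2 hmono2 hfix2' hgL hM hgLD hMD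
    refine ⟨2 * max N₀ N₁ + 2, fun m hm' => ?_⟩
    rcases Nat.even_or_odd m with ⟨k, hk⟩ | ⟨k, hk⟩
    · have hkN : N₀ ≤ k := by omega
      have : g^[m] '' L = (g^[2])^[k] '' L := by
        rw [show m = 2 * k by omega, Function.iterate_mul]
      rw [this]
      exact hN₀ k hkN
    · have hkN : N₁ ≤ k := by omega
      have : g^[m] '' L = (g^[2])^[k] '' (g '' L) := by
        rw [show m = 2 * k + 1 by omega, show 2 * k + 1 = 2 * k + 1 from rfl,
          Function.iterate_add, Function.iterate_mul, iterate_one, image_comp]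
      rw [this]
      exact hN₁ k hkN
private lemma closure_comp_inter {Ω : Set ℝ} (hΩ : IsOpen Ω) {y t : ℝ} (htΩ : t ∈ Ω)
    (ht : t ∈ closure (connectedComponentIn Ω y)) : t ∈ connectedComponentIn Ω y := by
  have hU : IsOpen (connectedComponentIn Ω t) := hΩ.connectedComponentIn
  have htU : t ∈ connectedComponentIn Ω t := mem_connectedComponentIn htΩ
  obtain ⟨z, hzU, hzC⟩ := mem_closure_iff.mp ht _ hU htU
  have h1 : connectedComponentIn Ω t = connectedComponentIn Ω z := connectedComponentIn_eq hzU
  have h2 : connectedComponentIn Ω y = connectedComponentIn Ω z := connectedComponentIn_eq hzC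
  rw [h2, ← h1]
  exact htU

private lemma inter_comp_compact {Ω : Set ℝ} (hΩ : IsOpen Ω) {K : Set ℝ} (hK : IsCompact K)
    (hKΩ : K ⊆ Ω) (y : ℝ) : IsCompact (K ∩ connectedComponentIn Ω y) := by
  have : K ∩ connectedComponentIn Ω y = K ∩ closure (connectedComponentIn Ω y) := by
    apply Set.eq_of_subset_of_subset
    · exact inter_subset_inter_right K subset_closure
    · rintro t ⟨htK, htc⟩
      exact ⟨htK, closure_comp_inter hΩ (hKΩ htK) htc⟩
  rw [this]
  exact hK.inter_right isClosed_closure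
private lemma comp_image {Ω : Set ℝ} {Ψ : ℝ → ℝ} (hmaps : MapsTo Ψ Ω Ω)
    (hcΩ : ContinuousOn Ψ Ω) (n : ℕ) {x : ℝ} (hx : x ∈ Ω) :
    Ψ^[n] '' connectedComponentIn Ω x ⊆ connectedComponentIn Ω (Ψ^[n] x) := by
  have hsub := connectedComponentIn_subset Ω x
  have hpre : IsPreconnected (Ψ^[n] '' connectedComponentIn Ω x) :=
    isPreconnected_connectedComponentIn.image _ ((continuousOn_iterate hcΩ hmaps n).mono hsub)
  exact hpre.subset_connectedComponentIn
    (mem_image_of_mem _ (mem_connectedComponentIn hx))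
    ((hmaps.iterate n).mono hsub subset_rfl |>.image_subset)
private lemma pair_escape {Ω : Set ℝ} (hΩ : IsOpen Ω) {Ψ : ℝ → ℝ} (hmaps : MapsTo Ψ Ω Ω)
    (hcΩ : ContinuousOn Ψ Ω) (hiΩ : InjOn Ψ Ω)
    (hnp : ∀ t ∈ Ω, ∀ n : ℕ, 1 ≤ n → Ψ^[n] t ≠ t)
    {K : Set ℝ} (hK : IsCompact K) (hKΩ : K ⊆ Ω) {x y : ℝ} (hx : x ∈ Ω) (hy : y ∈ Ω) :
    ∃ N, ∀ n, N ≤ n →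
      (Ψ^[n] '' (K ∩ connectedComponentIn Ω x)) ∩ (K ∩ connectedComponentIn Ω y) = ∅ := by
  classical
  set S : Set ℕ := {n | Ψ^[n] x ∈ connectedComponentIn Ω y} with hS
  -- if n ∉ S then the image of the component of x misses the component of y
  have factA : ∀ n ∉ S, (Ψ^[n] '' connectedComponentIn Ω x) ∩ connectedComponentIn Ω y = ∅ := by
    intro n hn
    rw [eq_empty_iff_forall_notMem]
    rintro z ⟨hz1, hz2⟩
    have hz3 : z ∈ connectedComponentIn Ω (Ψ^[n] x) := comp_image hmaps hcΩ n hx hz1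
    have : connectedComponentIn Ω (Ψ^[n] x) = connectedComponentIn Ω z := connectedComponentIn_eq hz3
    have h2 : connectedComponentIn Ω y = connectedComponentIn Ω z := connectedComponentIn_eq hz2
    apply hn
    show Ψ^[n] x ∈ connectedComponentIn Ω y
    rw [h2, ← this]
    exact mem_connectedComponentIn ((hmaps.iterate n) hx)
  by_cases hSfin : S.Finite
  · obtain ⟨b, hb⟩ := hSfin.bddAbove
    refine ⟨b + 1, fun n hn => ?_⟩
    have hnS : n ∉ S := fun h => by have := hb h; omega
    rw [eq_empty_iff_forall_notMem]
    rintro z ⟨hz1, hz2⟩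
    have : z ∈ (Ψ^[n] '' connectedComponentIn Ω x) ∩ connectedComponentIn Ω y := by
      obtain ⟨w, hw, rfl⟩ := hz1
      exact ⟨mem_image_of_mem _ hw.2, hz2.2⟩
    rw [factA n hnS] at this
    exact this
  · have hSinf : S.Infinite := hSfin
    obtain ⟨n₁, hn₁⟩ := hSinf.nonempty
    obtain ⟨n₂, hn₂S, hn₂⟩ := hSinf.exists_gt n₁
    set x' := Ψ^[n₁] x with hx'
    set D := connectedComponentIn Ω y with hD
    have hx'D : x' ∈ D := hn₁
    have hx'Ω : x' ∈ Ω := connectedComponentIn_subset Ω y hx'D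
    have hDΩ : D ⊆ Ω := connectedComponentIn_subset Ω y
    have hDpre : IsPreconnected D := isPreconnected_connectedComponentIn
    have hCx'D : connectedComponentIn Ω x' = D := (connectedComponentIn_eq hx'D).symm
    set S' : Set ℕ := {k | Ψ^[k] x' ∈ D} with hS'
    have hsub : ∀ k ∈ S', Ψ^[k] '' D ⊆ D := by
      intro k hk
      have h1 : Ψ^[k] '' D ⊆ connectedComponentIn Ω (Ψ^[k] x') := by
        rw [← hCx'D]; exact comp_image hmaps hcΩ k hx'Ω
      have h2 : connectedComponentIn Ω (Ψ^[k] x') = D := (connectedComponentIn_eq hk).symm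
      rwa [h2] at h1
    set p := n₂ - n₁ with hp
    have hp1 : 1 ≤ p := by omega
    have hpS' : p ∈ S' := by
      show Ψ^[p] x' ∈ D
      rw [hx', ← Function.iterate_add_apply, show p + n₁ = n₂ by omega]
      exact hn₂S
    set g := Ψ^[p] with hg
    have hgm : MapsTo g D D := mapsTo_iff_image_subset.mpr (hsub p hpS')
    have hgc : ContinuousOn g D := (continuousOn_iterate hcΩ hmaps p).mono hDΩ
    have hgi : InjOn g D := (injOn_iterate hiΩ hmaps p).mono hDΩ
    have hgfix1 : ∀ t ∈ D, g t ≠ t := fun t ht => hnp t (hDΩ ht) p hp1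
    have hgfix2 : ∀ t ∈ D, g (g t) ≠ t := by
      intro t ht
      have : g (g t) = Ψ^[p + p] t := (Function.iterate_add_apply Ψ p p t).symm
      rw [this]
      exact hnp t (hDΩ ht) (p + p) (by omega)
    set M := K ∩ D with hM
    have hMc : IsCompact M := inter_comp_compact hΩ hK hKΩ y
    have hMD : M ⊆ D := inter_subset_right
    set L₀ := Ψ^[n₁] '' (K ∩ connectedComponentIn Ω x) with hL₀
    have hL₀c : IsCompact L₀ :=
      (inter_comp_compact hΩ hK hKΩ x).image_of_continuousOn
        ((continuousOn_iterate hcΩ hmaps n₁).mono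
          (fun t ht => hKΩ ht.1))
    have hL₀D : L₀ ⊆ D := by
      rintro _ ⟨w, hw, rfl⟩
      have h1 : Ψ^[n₁] w ∈ connectedComponentIn Ω (Ψ^[n₁] x) :=
        comp_image hmaps hcΩ n₁ hx (mem_image_of_mem _ hw.2)
      have h2 : connectedComponentIn Ω (Ψ^[n₁] x) = D := (connectedComponentIn_eq hn₁).symm
      rwa [h2] at h1
    -- per-residue escape
    have hres : ∀ r : ℕ, ∃ Nr : ℕ, ∀ k ∈ S', k % p = r → Nr ≤ k → (Ψ^[k] '' L₀) ∩ M = ∅ := by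
      intro r
      by_cases hT : ∃ a ∈ S', a % p = r
      · have hTex : ∃ a, a ∈ S' ∧ a % p = r := hT
        set a := Nat.find hTex with ha
        obtain ⟨haS', har⟩ := Nat.find_spec hTex
        have hamin : ∀ k ∈ S', k % p = r → a ≤ k := fun k hk hkr =>
          Nat.find_min' hTex ⟨hk, hkr⟩
        set Lr := Ψ^[a] '' L₀ with hLr
        have hLrc : IsCompact Lr := hL₀c.image_of_continuousOn
          ((continuousOn_iterate hcΩ hmaps a).mono (hL₀D.trans hDΩ))
        have hLrD : Lr ⊆ D := by
          rintro _ ⟨w, hw, rfl⟩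
          exact hsub a haS' (mem_image_of_mem _ (hL₀D hw))
        obtain ⟨N', hN'⟩ := escape hDpre hgm hgc hgi hgfix1 hgfix2 hLrc hMc hLrD hMD
        refine ⟨a + p * N' + 1, fun k hkS' hkr hk => ?_⟩
        have hak : a ≤ k := hamin k hkS' hkr
        have hdvd : p ∣ k - a := (Nat.modEq_iff_dvd' hak).mp (by
          show a % p = k % p
          rw [har, hkr])
        obtain ⟨m, hm⟩ := hdvd
        have hkm : k = a + p * m := by omega
        have hmN' : N' ≤ m := by
          by_contra hcon
          push_neg at hcon
          have h1 : m + 1 ≤ N' := hcon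
          have : p * m + p ≤ p * N' := by
            calc p * m + p = p * (m + 1) := by ring
            _ ≤ p * N' := Nat.mul_le_mul_left p h1
          omega
        have himg : Ψ^[k] '' L₀ = g^[m] '' Lr := by
          rw [hkm, show a + p * m = p * m + a by omega, Function.iterate_add,
            Function.iterate_mul, image_comp]
        rw [himg]
        exact hN' m hmN'
      · push_neg at hT
        exact ⟨0, fun k hk hkr _ => absurd hkr (hT k hk)⟩
    choose Nr hNr using hres
    refine ⟨n₁ + (Finset.range p).sup Nr + 1, fun n hn => ?_⟩
    by_cases hnS : n ∈ S
    · set k := n - n₁ with hk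
      have hkS' : k ∈ S' := by
        show Ψ^[k] x' ∈ D
        rw [hx', ← Function.iterate_add_apply, show k + n₁ = n by omega]
        exact hnS
      have himg : Ψ^[n] '' (K ∩ connectedComponentIn Ω x) = Ψ^[k] '' L₀ := by
        rw [hL₀, ← image_comp, ← Function.iterate_add, show k + n₁ = n by omega]
      rw [himg]
      have hrlt : k % p < p := Nat.mod_lt _ (by omega)
      have hsup : Nr (k % p) ≤ (Finset.range p).sup Nr :=
        Finset.le_sup (Finset.mem_range.mpr hrlt)
      exact hNr (k % p) k hkS' rfl (by omega)
    · rw [eq_empty_iff_forall_notMem]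
      rintro z ⟨hz1, hz2⟩
      have : z ∈ (Ψ^[n] '' connectedComponentIn Ω x) ∩ connectedComponentIn Ω y := by
        obtain ⟨w, hw, rfl⟩ := hz1
        exact ⟨mem_image_of_mem _ hw.2, hz2.2⟩
      rw [factA n hnS] at this
      exact this
private lemma strong_escape {Ω : Set ℝ} (hΩ : IsOpen Ω) {Ψ : ℝ → ℝ} (hmaps : MapsTo Ψ Ω Ω)
    (hcΩ : ContinuousOn Ψ Ω) (hiΩ : InjOn Ψ Ω)
    (hnp : ∀ t ∈ Ω, ∀ n : ℕ, 1 ≤ n → Ψ^[n] t ≠ t)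
    {K : Set ℝ} (hK : IsCompact K) (hKΩ : K ⊆ Ω) :
    ∃ N, ∀ n, N ≤ n → (Ψ^[n] '' K) ∩ K = ∅ := by
  classical
  set U : ↥K → Set ℝ := fun t => connectedComponentIn Ω ↑t with hU
  have hUopen : ∀ t, IsOpen (U t) := fun t => hΩ.connectedComponentIn
  have hUcover : K ⊆ ⋃ t, U t := fun z hz =>
    mem_iUnion.mpr ⟨⟨z, hz⟩, mem_connectedComponentIn (hKΩ hz)⟩
  obtain ⟨F, hF⟩ := hK.elim_finite_subcover U hUopen hUcover
  have hpair : ∀ t s : ↥K, ∃ N, ∀ n, N ≤ n →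
      (Ψ^[n] '' (K ∩ connectedComponentIn Ω ↑t)) ∩ (K ∩ connectedComponentIn Ω ↑s) = ∅ :=
    fun t s => pair_escape hΩ hmaps hcΩ hiΩ hnp hK hKΩ (hKΩ t.2) (hKΩ s.2)
  choose N hN using hpair
  refine ⟨F.sup (fun t => F.sup (fun s => N t s)), fun n hn => ?_⟩
  rw [eq_empty_iff_forall_notMem]
  rintro z ⟨⟨w, hwK, rfl⟩, hzK⟩
  obtain ⟨t, htF, hwU⟩ : ∃ t ∈ F, w ∈ U t := by
    have := hF hwK
    simpa using this
  obtain ⟨s, hsF, hzU⟩ : ∃ s ∈ F, Ψ^[n] w ∈ U s := by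
    have := hF hzK
    simpa using this
  have hmem : Ψ^[n] w ∈ (Ψ^[n] '' (K ∩ connectedComponentIn Ω ↑t)) ∩
      (K ∩ connectedComponentIn Ω ↑s) :=
    ⟨mem_image_of_mem _ ⟨hwK, hwU⟩, ⟨hzK, hzU⟩⟩
  have hle : N t s ≤ n := by
    calc N t s ≤ F.sup (fun s => N t s) := Finset.le_sup hsF
    _ ≤ F.sup (fun t => F.sup (fun s => N t s)) := Finset.le_sup (f := fun t => F.sup (fun s => N t s)) htF
    _ ≤ n := hn
  rw [hN t s n hle] at hmem
  exact hmem
/-- For an injective continuous self-map `ψ` of an open set `Ω ⊆ ℝ`, being run-away,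
being strongly run-away, and having no periodic points are equivalent. -/
theorem stmt_18 (Ω : Set ℝ) (hΩ : IsOpen Ω)
    (ψ : ↥Ω → ↥Ω) (hinj : Function.Injective ψ) (hcont : Continuous ψ) :
    List.TFAE [
      ∀ K : Set ↥Ω, IsCompact K → ∃ n : ℕ, 1 ≤ n ∧ (ψ^[n] '' K) ∩ K = ∅,
      ∀ K : Set ↥Ω, IsCompact K → ∃ N : ℕ, ∀ n, N ≤ n → (ψ^[n] '' K) ∩ K = ∅,
      ∀ x : ↥Ω, ∀ n : ℕ, 1 ≤ n → ψ^[n] x ≠ x ] := by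
  tfae_have 2 → 1
  · intro h2 K hK
    obtain ⟨N, hN⟩ := h2 K hK
    exact ⟨max N 1, le_max_right N 1, hN _ (le_max_left N 1)⟩
  tfae_have 1 → 3
  · intro h1 x n hn heq
    set K : Set ↥Ω := Set.range (fun i : Fin n => ψ^[(i : ℕ)] x) with hKdef
    have hKfin : K.Finite := Set.finite_range _
    obtain ⟨m, hm1, hm2⟩ := h1 K hKfin.isCompact
    have hxK : x ∈ K := ⟨⟨0, by omega⟩, rfl⟩
    have hmod : ∀ j : ℕ, ψ^[j] x = ψ^[j % n] x := by
      intro j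
      conv_lhs => rw [← Nat.mod_add_div j n, Function.iterate_add_apply,
        Function.iterate_mul, Function.iterate_fixed heq (j / n)]
    have hmK : ψ^[m] x ∈ K := by
      rw [hmod m]
      exact ⟨⟨m % n, Nat.mod_lt _ (by omega)⟩, rfl⟩
    have : ψ^[m] x ∈ (ψ^[m] '' K) ∩ K := ⟨Set.mem_image_of_mem _ hxK, hmK⟩
    rw [hm2] at this
    exact this
  tfae_have 3 → 2
  · intro h3 K hK
    classical
    set Ψ : ℝ → ℝ := fun t => if h : t ∈ Ω then ((ψ ⟨t, h⟩ : ↥Ω) : ℝ) else t with hΨ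
    have hΨcoe : ∀ z : ↥Ω, Ψ (z : ℝ) = ((ψ z : ↥Ω) : ℝ) := by
      intro z
      simp only [hΨ, dif_pos z.2, Subtype.coe_eta]
    have hcomm : ∀ (n : ℕ) (z : ↥Ω), Ψ^[n] (z : ℝ) = ((ψ^[n] z : ↥Ω) : ℝ) := by
      intro n
      induction n with
      | zero => intro z; rfl
      | succ n ih =>
        intro z
        rw [Function.iterate_succ_apply, hΨcoe z, ih (ψ z),
          ← Function.iterate_succ_apply]
    have hmaps : Set.MapsTo Ψ Ω Ω := by
      intro t ht
      have := hΨcoe ⟨t, ht⟩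
      simp only [Subtype.coe_mk] at this
      rw [this]
      exact (ψ ⟨t, ht⟩).2
    have hcΩ : ContinuousOn Ψ Ω := by
      rw [continuousOn_iff_continuous_restrict]
      have : Ω.restrict Ψ = fun z : ↥Ω => ((ψ z : ↥Ω) : ℝ) := funext fun z => hΨcoe z
      rw [show Ω.domRestrict Ψ = Ω.restrict Ψ from rfl, this]
      exact continuous_subtype_val.comp hcont
    have hiΩ : Set.InjOn Ψ Ω := by
      intro a ha b hb hab
      have h1 := hΨcoe ⟨a, ha⟩
      have h2 := hΨcoe ⟨b, hb⟩
      simp only [Subtype.coe_mk] at h1 h2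
      rw [h1, h2] at hab
      have := hinj (Subtype.coe_injective hab)
      exact congrArg Subtype.val this
    have hnp : ∀ t ∈ Ω, ∀ n : ℕ, 1 ≤ n → Ψ^[n] t ≠ t := by
      intro t ht n hn heq
      have h1 := hcomm n ⟨t, ht⟩
      simp only [Subtype.coe_mk] at h1
      rw [h1] at heq
      exact h3 ⟨t, ht⟩ n hn (Subtype.coe_injective heq)
    set K' : Set ℝ := Subtype.val '' K with hK'def
    have hK'c : IsCompact K' := hK.image continuous_subtype_val
    have hK'Ω : K' ⊆ Ω := by rintro _ ⟨z, _, rfl⟩; exact z.2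
    obtain ⟨N, hN⟩ := strong_escape hΩ hmaps hcΩ hiΩ hnp hK'c hK'Ω
    refine ⟨N, fun n hn => ?_⟩
    rw [Set.eq_empty_iff_forall_notMem]
    rintro z ⟨⟨w, hwK, rfl⟩, hzK⟩
    have hmem : ((ψ^[n] w : ↥Ω) : ℝ) ∈ (Ψ^[n] '' K') ∩ K' := by
      constructor
      · exact ⟨(w : ℝ), Set.mem_image_of_mem _ hwK, hcomm n w⟩
      · exact Set.mem_image_of_mem _ hzK
    rw [hN n hn] at hmem
    exact hmem
  tfae_finish
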